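/- Let H be a separable infinite-dimensional complex Hilbert space and let S ∈ B(H) be a bounded operator with S ∉ ℂ·I_H + K(H). Then the map D : K(H) → K(H) defined by D(T) = ST − TS is a well-defined bounded derivation on K(H) (its values are compact), and D is not inner: there is no x ∈ K(H) with D(T) = Tx − xT for all T ∈ K(H). -/

import Mathlib

open scoped InnerProductSpace

/-- A rank-one operator `v ↦ ⟪z, v⟫ • y` is compact. -/
lemma rankOne_isCompactOperator {H : Type*} [NormedAddCommGroup H] [InnerProductSpace ℂ H]
    (z y : H) : IsCompactOperator ⇑((innerSL ℂ z).smulRight y) := by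
  refine ⟨(fun c : ℂ => c • y) '' Metric.closedBall 0 ‖z‖,
    ((isCompact_closedBall 0 ‖z‖).image (by continuity)), ?_⟩
  refine Filter.mem_of_superset (Metric.closedBall_mem_nhds 0 one_pos) ?_
  intro v hv
  refine ⟨inner ℂ z v, ?_, rfl⟩
  simp only [Metric.mem_closedBall, dist_zero_right]
  calc ‖(inner ℂ z v : ℂ)‖ ≤ ‖z‖ * ‖v‖ := norm_inner_le_norm z v
    _ ≤ ‖z‖ * 1 := by
        have := mem_closedBall_zero_iff.mp hv
        exact mul_le_mul_of_nonneg_left this (norm_nonneg z)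
    _ = ‖z‖ := mul_one _

theorem ad_of_noncompact_perturbation_is_outer_derivation
    (H : Type*) [NormedAddCommGroup H] [InnerProductSpace ℂ H] [CompleteSpace H]
    [TopologicalSpace.SeparableSpace H] (hinf : ¬ FiniteDimensional ℂ H)
    (S : H →L[ℂ] H)
    (hS : ∀ (c : ℂ) (K : H →L[ℂ] H), IsCompactOperator ⇑K →
      S ≠ c • (1 : H →L[ℂ] H) + K) :
    (∀ T : H →L[ℂ] H, IsCompactOperator ⇑T → IsCompactOperator ⇑(S * T - T * S)) ∧
      (∀ S' T : H →L[ℂ] H, IsCompactOperator ⇑S' → IsCompactOperator ⇑T →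
        S * (S' + T) - (S' + T) * S = (S * S' - S' * S) + (S * T - T * S)) ∧
      (∀ (c : ℂ) (T : H →L[ℂ] H), IsCompactOperator ⇑T →
        S * (c • T) - (c • T) * S = c • (S * T - T * S)) ∧
      (∃ C : ℝ, ∀ T : H →L[ℂ] H, IsCompactOperator ⇑T → ‖S * T - T * S‖ ≤ C * ‖T‖) ∧
      (∀ S' T : H →L[ℂ] H, IsCompactOperator ⇑S' → IsCompactOperator ⇑T →
        S * (S' * T) - (S' * T) * S = S' * (S * T - T * S) + (S * S' - S' * S) * T) ∧
      ¬ ∃ x : H →L[ℂ] H, IsCompactOperator ⇑x ∧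
        ∀ T : H →L[ℂ] H, IsCompactOperator ⇑T → S * T - T * S = T * x - x * T := by
  refine ⟨?_, ?_, ?_, ?_, ?_, ?_⟩
  · intro T hT
    exact ((hT.continuous_comp S.continuous).sub (hT.comp_clm S))
  · intro S' T _ _; noncomm_ring
  · intro c T _; rw [mul_smul_comm, smul_mul_assoc, smul_sub]
  · refine ⟨2 * ‖S‖, fun T _ => ?_⟩
    calc ‖S * T - T * S‖ ≤ ‖S * T‖ + ‖T * S‖ := norm_sub_le _ _
      _ ≤ ‖S‖ * ‖T‖ + ‖T‖ * ‖S‖ := add_le_add (norm_mul_le _ _) (norm_mul_le _ _)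
      _ = 2 * ‖S‖ * ‖T‖ := by ring
  · intro S' T _ _; noncomm_ring
  · rintro ⟨x, hx, hcomm⟩
    -- A := S + x commutes with every compact operator
    have hA : ∀ T : H →L[ℂ] H, IsCompactOperator ⇑T → (S + x) * T = T * (S + x) := by
      intro T hT
      have := hcomm T hT
      have h' : S * T - T * S - (T * x - x * T) = 0 := by rw [this]; noncomm_ring
      have h2 : (S + x) * T - T * (S + x) = 0 := by rw [← h']; noncomm_ring
      exact sub_eq_zero.mp h2
    -- hence S + x is a scalar
    have : Nontrivial H := by
      rcases subsingleton_or_nontrivial H with h | h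
      · exact absurd (Module.Finite.of_basis (Module.Basis.empty H (ι := Empty))) hinf
      · exact h
    obtain ⟨v, hv⟩ := exists_ne (0 : H)
    set A := S + x with hAdef
    have key : ∀ y : H, (⟪v, v⟫_ℂ) • A y = (⟪v, A v⟫_ℂ) • y := by
      intro y
      have h3 := hA ((innerSL ℂ v).smulRight y) (rankOne_isCompactOperator v y)
      have h4 := congrArg (fun f : H →L[ℂ] H => f v) h3
      simpa [ContinuousLinearMap.smulRight_apply, map_smul] using h4
    have hvv : (⟪v, v⟫_ℂ) ≠ 0 := inner_self_ne_zero.mpr hv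
    set c : ℂ := ⟪v, A v⟫_ℂ / ⟪v, v⟫_ℂ with hc
    have hAc : A = c • (1 : H →L[ℂ] H) := by
      ext y
      have := key y
      have : A y = (⟪v, v⟫_ℂ)⁻¹ • ((⟪v, A v⟫_ℂ) • y) := by
        rw [← this, ← smul_assoc, smul_eq_mul, inv_mul_cancel₀ hvv, one_smul]
      simp only [this, ContinuousLinearMap.smul_apply, ContinuousLinearMap.one_apply,
        smul_smul, hc]
      ring_nf
    exact hS c (-x) hx.neg (by rw [← hAc]; simp [hAdef])
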